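/- For a connected graph G with n vertices and m edges, Alb(u∨G) − Alb(G) = n(n−1) − 2m, where u∨G is the join of a new vertex u with G. -/

import Mathlib

open Finset

/-- The Albertson irregularity index `Alb(G) = ∑_{uv∈E(G)} |d(u)-d(v)|`. -/
noncomputable def Alb {V : Type*} [Fintype V] (G : SimpleGraph V) [DecidableRel G.Adj] : ℝ :=
  (∑ u : V, ∑ v ∈ G.neighborFinset u, |(G.degree u : ℝ) - (G.degree v : ℝ)|) / 2

/-- The join `u ∨ G`: a new vertex (`none`) adjacent to every vertex of `G`. -/
def cone {V : Type*} (G : SimpleGraph V) : SimpleGraph (Option V) where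
  Adj x y :=
    (∃ v, x = none ∧ y = some v) ∨ (∃ v, x = some v ∧ y = none) ∨
    (∃ a b, x = some a ∧ y = some b ∧ G.Adj a b)
  symm := by
    constructor
    rintro x y (⟨v, hx, hy⟩ | ⟨v, hx, hy⟩ | ⟨a, b, hx, hy, h⟩)
    · exact Or.inr (Or.inl ⟨v, hy, hx⟩)
    · exact Or.inl ⟨v, hy, hx⟩
    · exact Or.inr (Or.inr ⟨b, a, hy, hx, h.symm⟩)
  loopless := by
    constructor
    rintro x (⟨v, hx, hy⟩ | ⟨v, hx, hy⟩ | ⟨a, b, hx, hy, h⟩) <;> subst hx <;> simp_all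

instance coneAdjDecidable {V : Type*} [Fintype V] [DecidableEq V]
    (G : SimpleGraph V) [DecidableRel G.Adj] : DecidableRel (cone G).Adj := fun x y => by
  unfold cone
  infer_instance

lemma cone_adj_none_some {V : Type*} (G : SimpleGraph V) (v : V) :
    (cone G).Adj none (some v) := Or.inl ⟨v, rfl, rfl⟩

lemma cone_adj_some_some {V : Type*} (G : SimpleGraph V) (a b : V) :
    (cone G).Adj (some a) (some b) ↔ G.Adj a b := by
  constructor
  · rintro (⟨v, h, _⟩ | ⟨v, _, h⟩ | ⟨x, y, hx, hy, h⟩)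
    · exact absurd h (by simp)
    · exact absurd h (by simp)
    · cases hx; cases hy; simpa using h
  · intro h; exact Or.inr (Or.inr ⟨a, b, rfl, rfl, h⟩)

lemma cone_nf_none {V : Type*} [Fintype V] [DecidableEq V]
    (G : SimpleGraph V) [DecidableRel G.Adj] :
    (cone G).neighborFinset none = univ.image some := by
  ext y
  cases y with
  | none => simp [SimpleGraph.mem_neighborFinset]
  | some v => simp [SimpleGraph.mem_neighborFinset, cone_adj_none_some]

lemma cone_nf_some {V : Type*} [Fintype V] [DecidableEq V]
    (G : SimpleGraph V) [DecidableRel G.Adj] (u : V) :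
    (cone G).neighborFinset (some u) = insert none ((G.neighborFinset u).image some) := by
  ext y
  cases y with
  | none => simp [SimpleGraph.mem_neighborFinset, (cone_adj_none_some G u).symm]
  | some v => simp [SimpleGraph.mem_neighborFinset, cone_adj_some_some]

lemma cone_deg_none {V : Type*} [Fintype V] [DecidableEq V]
    (G : SimpleGraph V) [DecidableRel G.Adj] :
    (cone G).degree none = Fintype.card V := by
  rw [SimpleGraph.degree, cone_nf_none, Finset.card_image_of_injective _ (Option.some_injective V),
    Finset.card_univ]

lemma cone_deg_some {V : Type*} [Fintype V] [DecidableEq V]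
    (G : SimpleGraph V) [DecidableRel G.Adj] (u : V) :
    (cone G).degree (some u) = G.degree u + 1 := by
  rw [SimpleGraph.degree, cone_nf_some, Finset.card_insert_of_notMem (by simp),
    Finset.card_image_of_injective _ (Option.some_injective V)]
  rfl

theorem stmt9 {V : Type*} [Fintype V] [DecidableEq V]
    (G : SimpleGraph V) [DecidableRel G.Adj] (hG : G.Connected) :
    Alb (cone G) - Alb G =
      (Fintype.card V : ℝ) * ((Fintype.card V : ℝ) - 1) - 2 * (G.edgeFinset.card : ℝ) := by
  have habs : ∀ v : V, |(Fintype.card V : ℝ) - ((G.degree v : ℝ) + 1)|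
      = (Fintype.card V : ℝ) - 1 - (G.degree v : ℝ) := by
    intro v
    rw [abs_of_nonneg]
    · ring
    · have := G.degree_lt_card_verts v
      have : (G.degree v : ℝ) + 1 ≤ (Fintype.card V : ℝ) := by exact_mod_cast this
      linarith
  have key : Alb (cone G) = Alb G + ∑ v : V, ((Fintype.card V : ℝ) - 1 - (G.degree v : ℝ)) := by
    unfold Alb
    rw [Fintype.sum_option]
    rw [cone_nf_none]
    rw [Finset.sum_image (by simp [Option.some_injective])]
    have h1 : ∑ v : V, |((cone G).degree none : ℝ) - ((cone G).degree (some v) : ℝ)|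
        = ∑ v : V, ((Fintype.card V : ℝ) - 1 - (G.degree v : ℝ)) := by
      refine Finset.sum_congr rfl fun v _ => ?_
      rw [cone_deg_none, cone_deg_some]
      push_cast
      exact habs v
    have h2 : ∀ u : V, ∑ y ∈ (cone G).neighborFinset (some u),
        |((cone G).degree (some u) : ℝ) - ((cone G).degree y : ℝ)|
        = ((Fintype.card V : ℝ) - 1 - (G.degree u : ℝ))
          + ∑ v ∈ G.neighborFinset u, |(G.degree u : ℝ) - (G.degree v : ℝ)| := by
      intro u
      rw [cone_nf_some, Finset.sum_insert (by simp),
        Finset.sum_image (by simp [Option.some_injective])]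
      rw [cone_deg_none, cone_deg_some]
      have : |((G.degree u : ℕ) + 1 : ℝ) - (Fintype.card V : ℝ)|
          = (Fintype.card V : ℝ) - 1 - (G.degree u : ℝ) := by
        rw [abs_sub_comm]; push_cast; exact habs u
      push_cast
      rw [this]
      congr 1
      refine Finset.sum_congr rfl fun v _ => ?_
      rw [cone_deg_some]
      push_cast
      ring_nf
    rw [Finset.sum_congr rfl fun u _ => h2 u, Finset.sum_add_distrib]
    rw [h1]
    ring
  rw [key]
  have hsum : ∑ v : V, (G.degree v : ℝ) = 2 * (G.edgeFinset.card : ℝ) := by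
    have := G.sum_degrees_eq_twice_card_edges
    exact_mod_cast congrArg (Nat.cast : ℕ → ℝ) this
  rw [Finset.sum_sub_distrib, hsum, Finset.sum_const, Finset.card_univ]
  push_cast
  ring
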